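/- Let X be a vector space with basis (v_i)_{i ∈ I}, where I is partially ordered so that every strictly decreasing chain is finite. If (u_i)_{i ∈ I} is a family of vectors such that each u_j equals v_j plus a linear combination of v_i with i < j, then (u_i)_{i ∈ I} is a basis of X. -/

import Mathlib

/-- Let `X` be a vector space with basis `(v i)_{i ∈ I}`, where the partial order on `I`
has no infinite strictly decreasing chains (i.e. `<` is well-founded). If each `u j`
equals `v j` plus a linear combination of the `v i` with `i < j`, then `(u i)` is again
a basis of `X`: it is linearly independent and spans `X`. -/
theorem stmt_7 {K X I : Type*} [Field K] [AddCommGroup X] [Module K X]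
    [PartialOrder I] [WellFoundedLT I]
    (v : Module.Basis I K X) (u : I → X)
    (h : ∀ j, u j - v j ∈ Submodule.span K (v '' {i | i < j})) :
    LinearIndependent K u ∧ Submodule.span K (Set.range u) = ⊤ := by
  have hrepr : ∀ i j, ¬ j < i → j ≠ i → v.repr (u i) j = 0 := by
    intro i j hlt hne
    have hs := v.mem_span_image.mp (h i)
    have hj : j ∉ (v.repr (u i - v i)).support := fun hj => hlt (hs hj)
    simp only [Finsupp.mem_support_iff, not_not] at hj
    rw [map_sub, Finsupp.sub_apply, v.repr_self, Finsupp.single_eq_of_ne' hne.symm] at hj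
    simpa using hj
  constructor
  · rw [linearIndependent_iff]
    intro l hl
    by_contra hne
    obtain ⟨j, hjs, hjmax⟩ := l.support.exists_maximal (Finsupp.support_nonempty_iff.mpr hne)
    have h0 : v.repr (Finsupp.linearCombination K u l) j = 0 := by rw [hl]; simp
    rw [Finsupp.linearCombination_apply, Finsupp.sum, map_sum] at h0
    have : ∑ i ∈ l.support, l i * v.repr (u i) j = 0 := by
      simpa [Finsupp.sum] using h0
    rw [Finset.sum_eq_single j] at this
    · have huj : v.repr (u j) j = 1 := by
        have hs := v.mem_span_image.mp (h j)
        have hj : j ∉ (v.repr (u j - v j)).support := fun hj => lt_irrefl j (hs hj)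
        simp only [Finsupp.mem_support_iff, not_not] at hj
        rw [map_sub, Finsupp.sub_apply, v.repr_self, Finsupp.single_eq_same] at hj
        exact sub_eq_zero.mp hj
      rw [huj, mul_one] at this
      exact (Finsupp.mem_support_iff.mp hjs) this
    · intro i his hij
      rw [hrepr i j (fun hlt => (hjmax his hlt.le).not_gt hlt) (Ne.symm hij), mul_zero]
    · intro hjs'; exact absurd hjs hjs'
  · have hv : ∀ j, v j ∈ Submodule.span K (Set.range u) := by
      intro j
      induction j using WellFoundedLT.induction with
      | ind j ih =>
        have h1 : u j - v j ∈ Submodule.span K (Set.range u) := by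
          refine Submodule.span_le.mpr ?_ (h j)
          rintro _ ⟨i, hi, rfl⟩
          exact ih i hi
        have h2 : u j ∈ Submodule.span K (Set.range u) :=
          Submodule.subset_span ⟨j, rfl⟩
        simpa using Submodule.sub_mem _ h2 h1
    rw [eq_top_iff, ← v.span_eq]
    exact Submodule.span_le.mpr (fun x ⟨i, hx⟩ => hx ▸ hv i)
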